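/- arXiv:2506.03603 — 4 statements merged into one kernel-verified Lean document; each statement's English description precedes it below -/
import Mathlib

section
/- Let G be a chordal graph with no infinite clique. Then G is the intersection graph of a set of subtrees of a tree. (Halin's theorem.) -/
open Set

universe u

/-- The intersection graph of a family `F` of sets: vertices are the members of `F`,
two distinct members adjacent iff they intersect. -/
def IntGraph {W : Type u} (F : Set (Set W)) : SimpleGraph F where
  Adj S T := S ≠ T ∧ ((S : Set W) ∩ (T : Set W)).Nonempty
  symm := by
    constructor
    rintro S T ⟨h1, x, hx1, hx2⟩
    exact ⟨h1.symm, x, hx2, hx1⟩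
  loopless := by constructor; rintro S ⟨h, _⟩; exact h rfl

/-- `G` has an induced cycle of length at least 4. -/
def HasLongInducedCycle {V : Type u} (G : SimpleGraph V) : Prop :=
  ∃ n : ℕ, 4 ≤ n ∧ ∃ f : ZMod n → V, Function.Injective f ∧
    ∀ i j : ZMod n, G.Adj (f i) (f j) ↔ (j = i + 1 ∨ i = j + 1)

/-- A graph is chordal iff it has no induced cycle of length at least 4. -/
def Chordal {V : Type u} (G : SimpleGraph V) : Prop := ¬ HasLongInducedCycle G

/-- The chordal property for a family of sets: its intersection graph is chordal. -/
def ChordalProp {W : Type u} (F : Set (Set W)) : Prop := Chordal (IntGraph F)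

/-- The finite Helly property: every nonempty finite subfamily whose members pairwise
intersect has a common element. -/
def FiniteHelly {W : Type u} (F : Set (Set W)) : Prop :=
  ∀ R : Finset (Set W), R.Nonempty → ↑R ⊆ F →
    (∀ S ∈ R, ∀ T ∈ R, S ≠ T → (S ∩ T).Nonempty) →
    (⋂ S ∈ R, S).Nonempty

/-- A family `F` is well-founded if there is no sequence `(Sᵢ)` of members of `F` with
nonempty total intersection such that no partial intersection `S₀ ∩ ⋯ ∩ Sᵢ` is contained
in `S_{i+1}`. -/
def WellFoundedFamily {W : Type u} (F : Set (Set W)) : Prop :=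
  ¬ ∃ S : ℕ → Set W, (∀ i, S i ∈ F) ∧ (⋂ i, S i).Nonempty ∧
      ∀ i, ¬ (⋂ j ≤ i, S j) ⊆ S (i + 1)

/-- `X` is `F`-connected: for every partition of `X` into two nonempty parts, some
member of `F` included in `X` meets both parts. -/
def FConnected {W : Type u} (F : Set (Set W)) (X : Set W) : Prop :=
  ∀ A B : Set W, A ∪ B = X → A ∩ B = ∅ → A.Nonempty → B.Nonempty →
    ∃ S ∈ F, S ⊆ X ∧ (S ∩ A).Nonempty ∧ (S ∩ B).Nonempty

/-- A path-decomposition of `G` indexed by `Fin n`: bags cover all vertices and edges,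
and for each vertex the set of indices of bags containing it is an interval. -/
def IsPathDecomp {V : Type u} (G : SimpleGraph V) {n : ℕ} (B : Fin n → Finset V) : Prop :=
  (∀ v, ∃ i, v ∈ B i) ∧
  (∀ u v, G.Adj u v → ∃ i, u ∈ B i ∧ v ∈ B i) ∧
  (∀ v : V, ∀ i i' i'' : Fin n, i ≤ i' → i' ≤ i'' → v ∈ B i → v ∈ B i'' → v ∈ B i')

/-- `G` has path-width at most `k`: some path-decomposition has all bags of size ≤ k+1. -/
def PathWidthLE {V : Type u} (G : SimpleGraph V) (k : ℕ) : Prop :=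
  ∃ (n : ℕ) (B : Fin n → Finset V), IsPathDecomp G B ∧ ∀ i, (B i).card ≤ k + 1

/-- `G` has line-width at most `k`: there is a decomposition indexed by a linearly ordered
set, satisfying the path-decomposition axioms, with all bags of size ≤ k+1. -/
def LineWidthLE {V : Type u} (G : SimpleGraph V) (k : ℕ) : Prop :=
  ∃ (L : Type u) (r : L → L → Prop), IsLinearOrder L r ∧
    ∃ B : L → Finset V,
      (∀ v, ∃ i, v ∈ B i) ∧
      (∀ u v, G.Adj u v → ∃ i, u ∈ B i ∧ v ∈ B i) ∧
      (∀ v i i' i'', r i i' → r i' i'' → v ∈ B i → v ∈ B i'' → v ∈ B i') ∧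
      ∀ i, (B i).card ≤ k + 1


namespace Halin

variable {V : Type u} {G : SimpleGraph V}

/-- Walks as functions: `a` to `b` within `X`, of length `m`. -/
def ReachIn (G : SimpleGraph V) (X : Set V) (a b : V) : Prop :=
  ∃ (q : ℕ → V) (m : ℕ), q 0 = a ∧ q m = b ∧ (∀ i < m, G.Adj (q i) (q (i + 1))) ∧
    ∀ i ≤ m, q i ∈ X

lemma ReachIn.refl {X : Set V} {a : V} (ha : a ∈ X) : ReachIn G X a a :=
  ⟨fun _ => a, 0, rfl, rfl, by omega, fun i hi => ha⟩

lemma ReachIn.mem_left {X : Set V} {a b : V} (h : ReachIn G X a b) : a ∈ X := by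
  obtain ⟨q, m, h0, hm, _, hX⟩ := h
  exact h0 ▸ hX 0 (Nat.zero_le _)

lemma ReachIn.mem_right {X : Set V} {a b : V} (h : ReachIn G X a b) : b ∈ X := by
  obtain ⟨q, m, h0, hm, _, hX⟩ := h
  exact hm ▸ hX m le_rfl

lemma ReachIn.trans {X : Set V} {a b c : V} (h1 : ReachIn G X a b) (h2 : ReachIn G X b c) :
    ReachIn G X a c := by
  obtain ⟨q1, m1, h10, h1m, h1adj, h1X⟩ := h1
  obtain ⟨q2, m2, h20, h2m, h2adj, h2X⟩ := h2
  refine ⟨fun i => if i ≤ m1 then q1 i else q2 (i - m1), m1 + m2, by simp [h10], ?_, ?_, ?_⟩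
  · show (if m1 + m2 ≤ m1 then q1 (m1 + m2) else q2 (m1 + m2 - m1)) = c
    by_cases h : m2 = 0
    · have h2m' : q2 0 = c := by rw [← h, h2m]
      rw [if_pos (by omega), show m1 + m2 = m1 by omega, h1m, ← h20, h2m']
    · rw [if_neg (by omega), show m1 + m2 - m1 = m2 by omega, h2m]
  · intro i hi
    show G.Adj (if i ≤ m1 then q1 i else q2 (i - m1))
      (if i + 1 ≤ m1 then q1 (i + 1) else q2 (i + 1 - m1))
    rcases lt_trichotomy i m1 with h | h | h
    · rw [if_pos (by omega)]
      by_cases he : i + 1 ≤ m1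
      · rw [if_pos he]; exact h1adj i (by omega)
      · rw [if_neg he, show i + 1 - m1 = 0 by omega, h20, ← h1m,
          show m1 = i + 1 by omega]
        exact h1adj i (by omega)
    · rw [if_pos (by omega), if_neg (by omega), show i + 1 - m1 = 1 by omega, h,
        h1m, ← h20]
      exact h2adj 0 (by omega)
    · rw [if_neg (by omega), if_neg (by omega), show i + 1 - m1 = (i - m1) + 1 by omega]
      exact h2adj _ (by omega)
  · intro i hi
    show (if i ≤ m1 then q1 i else q2 (i - m1)) ∈ X
    by_cases h : i ≤ m1
    · rw [if_pos h]; exact h1X i h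
    · rw [if_neg h]; exact h2X (i - m1) (by omega)

lemma ReachIn.symm {X : Set V} {a b : V} (h : ReachIn G X a b) : ReachIn G X b a := by
  obtain ⟨q, m, h0, hm, hadj, hX⟩ := h
  refine ⟨fun i => q (m - i), m, by simp [hm], by simp [h0], ?_, fun i hi => hX _ (by omega)⟩
  intro i hi
  show G.Adj (q (m - i)) (q (m - (i + 1)))
  rw [show m - i = (m - (i + 1)) + 1 by omega]
  exact (hadj _ (by omega)).symm

lemma ReachIn.mono {X Y : Set V} {a b : V} (hXY : X ⊆ Y) (h : ReachIn G X a b) :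
    ReachIn G Y a b := by
  obtain ⟨q, m, h0, hm, hadj, hX⟩ := h
  exact ⟨q, m, h0, hm, hadj, fun i hi => hXY (hX i hi)⟩

/-- Everything on a walk from `a` is reachable from `a`. -/
lemma ReachIn.of_prefix {X : Set V} {a : V} {q : ℕ → V} {m : ℕ} (h0 : q 0 = a)
    (hadj : ∀ i < m, G.Adj (q i) (q (i + 1))) (hX : ∀ i ≤ m, q i ∈ X) {j : ℕ} (hj : j ≤ m) :
    ReachIn G X a (q j) :=
  ⟨q, j, h0, rfl, fun i hi => hadj i (by omega), fun i hi => hX i (by omega)⟩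

/-- Bridge: an explicit chordless cycle of length `n ≥ 4` yields `HasLongInducedCycle`. -/
lemma bridge {n : ℕ} (hn : 4 ≤ n) (q : ℕ → V)
    (hinj : ∀ i j, i < n → j < n → q i = q j → i = j)
    (hadj : ∀ i, i + 1 < n → G.Adj (q i) (q (i + 1)))
    (hwrap : G.Adj (q (n - 1)) (q 0))
    (hno : ∀ i j, i + 2 ≤ j → j < n → ¬(i = 0 ∧ j = n - 1) → ¬ G.Adj (q i) (q j)) :
    HasLongInducedCycle G := by
  haveI : NeZero n := ⟨by omega⟩
  haveI : Fact (1 < n) := ⟨by omega⟩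
  refine ⟨n, hn, fun i => q i.val, ?_, ?_⟩
  · intro i j hij
    exact ZMod.val_injective n (hinj _ _ (ZMod.val_lt i) (ZMod.val_lt j) hij)
  · intro i j
    have hvale : ∀ i j : ZMod n, (j = i + 1 ↔ j.val = (i.val + 1) % n) := by
      intro i j
      constructor
      · rintro rfl
        rw [ZMod.val_add, ZMod.val_one]
      · intro h
        apply ZMod.val_injective n
        rw [ZMod.val_add, ZMod.val_one]
        exact h
    rw [hvale, hvale]
    have hiv := ZMod.val_lt i
    have hjv := ZMod.val_lt j
    set a := i.val with ha
    set b := j.val with hb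
    show G.Adj (q a) (q b) ↔ (b = (a + 1) % n ∨ a = (b + 1) % n)
    constructor
    · intro hadjab
      by_contra hcon
      push_neg at hcon
      obtain ⟨h1, h2⟩ := hcon
      rcases lt_trichotomy a b with hlt | heq | hlt
      · rcases Nat.eq_or_lt_of_le (Nat.succ_le_of_lt hlt) with he | hlt2
        · exact h1 (by rw [Nat.mod_eq_of_lt (by omega)]; omega)
        · by_cases hw : a = 0 ∧ b = n - 1
          · exact h2 (by rw [hw.2, show n - 1 + 1 = n by omega, Nat.mod_self]; omega)
          · exact hno a b (by omega) hjv hw hadjab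
      · rw [heq] at hadjab; exact G.loopless.irrefl _ hadjab
      · rcases Nat.eq_or_lt_of_le (Nat.succ_le_of_lt hlt) with he | hlt2
        · exact h2 (by rw [Nat.mod_eq_of_lt (by omega)]; omega)
        · by_cases hw : b = 0 ∧ a = n - 1
          · exact h1 (by rw [hw.2, show n - 1 + 1 = n by omega, Nat.mod_self]; omega)
          · exact hno b a (by omega) hiv hw hadjab.symm
    · intro hc
      rcases hc with h | h
      · rcases Nat.lt_or_ge (a + 1) n with hlt | hge
        · have hba : b = a + 1 := by rwa [Nat.mod_eq_of_lt hlt] at h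
          rw [hba]; exact hadj a hlt
        · have ha' : a = n - 1 := by omega
          have hb' : b = 0 := by rw [ha', show n - 1 + 1 = n by omega, Nat.mod_self] at h; omega
          rw [ha', hb']; exact hwrap
      · rcases Nat.lt_or_ge (b + 1) n with hlt | hge
        · have hab : a = b + 1 := by rwa [Nat.mod_eq_of_lt hlt] at h
          rw [hab]; exact (hadj b hlt).symm
        · have hb' : b = n - 1 := by omega
          have ha' : a = 0 := by rw [hb', show n - 1 + 1 = n by omega, Nat.mod_self] at h; omega
          rw [ha', hb']; exact hwrap.symm

/-- In a chordal graph, if `K` is a finite clique all of whose vertices have neighbours in a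
connected set `C` disjoint from `K`, then some vertex of `C` is complete to `K`. -/
lemma exists_complete (hch : Chordal G) (C : Set V) (hCne : C.Nonempty)
    (hconn : ∀ a ∈ C, ∀ b ∈ C, ReachIn G C a b)
    (K : Finset V) (hKC : ∀ k ∈ K, k ∉ C)
    (hKcl : ∀ k1 ∈ K, ∀ k2 ∈ K, k1 ≠ k2 → G.Adj k1 k2)
    (hKnb : ∀ k ∈ K, ∃ c ∈ C, G.Adj k c) :
    ∃ v ∈ C, ∀ k ∈ K, G.Adj v k := by
  classical
  obtain ⟨n, hn⟩ : ∃ n, K.card = n := ⟨_, rfl⟩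
  induction n generalizing K with
  | zero =>
    rcases hCne with ⟨v, hv⟩
    exact ⟨v, hv, by simp [Finset.card_eq_zero.mp hn]⟩
  | succ n ih =>
    have hKne : K.Nonempty := by rw [← Finset.card_pos, hn]; omega
    obtain ⟨k, hk⟩ := hKne
    set K' := K.erase k with hK'def
    have hK'sub : ∀ x ∈ K', x ∈ K := fun x hx => Finset.mem_of_mem_erase hx
    obtain ⟨v', hv'C, hv'⟩ := ih K' (fun x hx => hKC x (hK'sub x hx))
      (fun a ha b hb hab => hKcl _ (hK'sub _ ha) _ (hK'sub _ hb) hab)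
      (fun x hx => hKnb x (hK'sub x hx))
      (by rw [hK'def, Finset.card_erase_of_mem hk, hn]; rfl)
    have hkC : k ∉ C := hKC k hk
    have hkK' : k ∉ K' := Finset.notMem_erase k K
    obtain ⟨c, hcC, hkc⟩ := hKnb k hk
    obtain ⟨q0, m0, hq00, hq0m, hq0adj, hq0X⟩ := hconn v' hv'C c hcC
    set P : ℕ → Prop := fun m => ∃ q : ℕ → V, 1 ≤ m ∧ (∀ i < m, G.Adj (q i) (q (i + 1))) ∧
      q m = k ∧ (∀ i < m, q i ∈ C) ∧ (∀ k' ∈ K', G.Adj (q 0) k') with hPdef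
    have hPex : ∃ m, P m := by
      refine ⟨m0 + 1, fun i => if i ≤ m0 then q0 i else k, by omega, ?_, ?_, ?_, ?_⟩
      · intro i hi
        show G.Adj (if i ≤ m0 then q0 i else k) (if i + 1 ≤ m0 then q0 (i + 1) else k)
        by_cases h : i + 1 ≤ m0
        · rw [if_pos (by omega), if_pos h]; exact hq0adj i (by omega)
        · rw [if_pos (by omega), if_neg h, show i = m0 by omega, hq0m]
          exact hkc.symm
      · show (if m0 + 1 ≤ m0 then q0 (m0 + 1) else k) = k
        rw [if_neg (by omega)]
      · intro i hi
        show (if i ≤ m0 then q0 i else k) ∈ C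
        rw [if_pos (by omega)]; exact hq0X i (by omega)
      · intro k' hk'
        show G.Adj (if 0 ≤ m0 then q0 0 else k) k'
        rw [if_pos (by omega), hq00]; exact hv' k' hk'
    set L := Nat.find hPex with hLdef
    obtain ⟨q, hL1, hadj, hqL, hqC, hq0cpl⟩ : P L := Nat.find_spec hPex
    have hmin : ∀ m' < L, ¬ P m' := fun m' h => Nat.find_min hPex h
    have short : ∀ a b, a + 2 ≤ b → b ≤ L → ¬ G.Adj (q a) (q b) := by
      intro a b hab hbL hAdj
      apply hmin (L - (b - (a + 1))) (by omega)
      refine ⟨fun i => if i ≤ a then q i else q (i + (b - (a + 1))), by omega, ?_, ?_, ?_, ?_⟩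
      · intro i hi
        show G.Adj (if i ≤ a then q i else q (i + (b - (a + 1))))
          (if i + 1 ≤ a then q (i + 1) else q (i + 1 + (b - (a + 1))))
        by_cases h1 : i + 1 ≤ a
        · rw [if_pos (by omega), if_pos h1]; exact hadj i (by omega)
        · by_cases h2 : i ≤ a
          · rw [if_pos h2, if_neg h1, show i + 1 + (b - (a + 1)) = b by omega,
              show i = a by omega]
            exact hAdj
          · rw [if_neg h2, if_neg h1,
              show i + 1 + (b - (a + 1)) = (i + (b - (a + 1))) + 1 by omega]
            exact hadj _ (by omega)
      · show (if L - (b - (a + 1)) ≤ a then _ else q (L - (b - (a + 1)) + (b - (a + 1)))) = k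
        rw [if_neg (by omega), show L - (b - (a + 1)) + (b - (a + 1)) = L by omega, hqL]
      · intro i hi
        show (if i ≤ a then q i else q (i + (b - (a + 1)))) ∈ C
        by_cases h2 : i ≤ a
        · rw [if_pos h2]; exact hqC i (by omega)
        · rw [if_neg h2]; exact hqC _ (by omega)
      · intro k' hk'
        show G.Adj (if 0 ≤ a then q 0 else _) k'
        rw [if_pos (by omega)]; exact hq0cpl k' hk'
    have nodup : ∀ a b, a < b → b ≤ L → q a ≠ q b := by
      intro a b hab hbL heq
      by_cases h1 : b = a + 1
      · have hA := hadj a (by omega)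
        rw [← h1, ← heq] at hA
        exact G.loopless.irrefl _ hA
      · by_cases h2 : b = L
        · subst h2; rw [hqL] at heq
          have := hqC a (by omega)
          rw [heq] at this
          exact hkC this
        · have hA := hadj b (by omega)
          rw [← heq] at hA
          exact short a (b + 1) (by omega) (by omega) hA
    have int : ∀ i, 0 < i → i < L → ¬ (∀ k' ∈ K', G.Adj (q i) k') := by
      intro i hi0 hiL hcpl
      apply hmin (L - i) (by omega)
      refine ⟨fun j => q (i + j), by omega, ?_, ?_, ?_, ?_⟩
      · intro j hj
        show G.Adj (q (i + j)) (q (i + (j + 1)))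
        rw [show i + (j + 1) = (i + j) + 1 by omega]
        exact hadj _ (by omega)
      · show q (i + (L - i)) = k
        rw [show i + (L - i) = L by omega, hqL]
      · intro j hj
        exact hqC _ (by omega)
      · intro k' hk'
        show G.Adj (q (i + 0)) k'
        exact hcpl k' hk'
    by_cases hL : L = 1
    · refine ⟨q 0, hqC 0 (by omega), ?_⟩
      intro kk hkk
      by_cases hkkk : kk = k
      · subst hkkk
        have hA := hadj 0 (by omega)
        rw [show (0 : ℕ) + 1 = L by omega, hqL] at hA
        exact hA
      · exact hq0cpl kk (Finset.mem_erase.mpr ⟨hkkk, hkk⟩)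
    · exfalso
      have hL2 : 2 ≤ L := by omega
      obtain ⟨k', hk'K', hk'na⟩ : ∃ k' ∈ K', ¬ G.Adj (q (L - 1)) k' := by
        have hx := int (L - 1) (by omega) (by omega)
        push_neg at hx
        obtain ⟨k', h1, h2⟩ := hx
        exact ⟨k', h1, h2⟩
      have hk'K : k' ∈ K := hK'sub k' hk'K'
      have hk'notC : k' ∉ C := hKC k' hk'K
      have hk'nek : k' ≠ k := fun h => hkK' (h ▸ hk'K')
      set Pj : ℕ → Prop := fun j => G.Adj k' (q j) with hPjdef
      have hPj0 : Pj 0 := (hq0cpl k' hk'K').symm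
      set J := Nat.findGreatest Pj (L - 1) with hJdef
      have hJP : Pj J := Nat.findGreatest_spec (Nat.zero_le _) hPj0
      have hJle : J ≤ L - 1 := Nat.findGreatest_le _
      have hJmax : ∀ jj, J < jj → jj ≤ L - 1 → ¬ Pj jj :=
        fun jj h1 h2 => Nat.findGreatest_is_greatest h1 h2
      have hJne : J ≠ L - 1 := fun hh => hk'na (by rw [← hh]; exact hJP.symm)
      have hJL : J + 2 ≤ L := by omega
      apply hch
      refine bridge (n := L - J + 2) (by omega)
        (fun i => if i = L - J + 1 then k' else q (J + i)) ?_ ?_ ?_ ?_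
      · intro i j hi hj heq
        show i = j
        by_cases hik : i = L - J + 1 <;> by_cases hjk : j = L - J + 1
        · omega
        · exfalso
          rw [if_pos hik, if_neg hjk] at heq
          rcases Nat.lt_or_ge (J + j) L with hx | hx
          · have := hqC _ hx; rw [← heq] at this; exact hk'notC this
          · rw [show J + j = L by omega, hqL] at heq; exact hk'nek heq
        · exfalso
          rw [if_neg hik, if_pos hjk] at heq
          rcases Nat.lt_or_ge (J + i) L with hx | hx
          · have := hqC _ hx; rw [heq] at this; exact hk'notC this
          · rw [show J + i = L by omega, hqL] at heq; exact hk'nek heq.symm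
        · rw [if_neg hik, if_neg hjk] at heq
          rcases lt_trichotomy i j with hlt | he | hlt
          · exact absurd heq (nodup (J + i) (J + j) (by omega) (by omega))
          · exact he
          · exact absurd heq.symm (nodup (J + j) (J + i) (by omega) (by omega))
      · intro i hi
        show G.Adj (if i = L - J + 1 then k' else q (J + i))
          (if i + 1 = L - J + 1 then k' else q (J + (i + 1)))
        by_cases hik : i + 1 = L - J + 1
        · rw [if_neg (by omega), if_pos hik, show J + i = L by omega, hqL]
          exact hKcl k hk k' hk'K (fun hh => hk'nek hh.symm)
        · rw [if_neg (by omega), if_neg hik, show J + (i + 1) = (J + i) + 1 by omega]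
          exact hadj _ (by omega)
      · show G.Adj (if L - J + 2 - 1 = L - J + 1 then k' else _)
          (if 0 = L - J + 1 then k' else q (J + 0))
        rw [if_pos (by omega), if_neg (by omega)]
        exact hJP
      · intro i j hij hjn hnw hA
        by_cases hjk : j = L - J + 1
        · have hi0 : i ≠ 0 := fun hh => hnw ⟨hh, by omega⟩
          rw [if_pos hjk, if_neg (by omega)] at hA
          exact hJmax (J + i) (by omega) (by omega) hA.symm
        · rw [if_neg (by omega), if_neg hjk] at hA
          exact short (J + i) (J + j) (by omega) (by omega) hA

lemma ReachIn.single {X : Set V} {a b : V} (hadj : G.Adj a b) (ha : a ∈ X) (hb : b ∈ X) :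
    ReachIn G X a b := by
  refine ⟨fun i => if i = 0 then a else b, 1, by simp, by simp, ?_, ?_⟩
  · intro i hi
    show G.Adj (if i = 0 then a else b) (if i + 1 = 0 then a else b)
    rw [if_pos (by omega), if_neg (by omega)]
    exact hadj
  · intro i _
    show (if i = 0 then a else b) ∈ X
    by_cases h : i = 0
    · rw [if_pos h]; exact ha
    · rw [if_neg h]; exact hb

/-- Good partial well-orders: left neighbourhoods are cliques, and neighbourhoods of
connected subsets of the complement of the domain are cliques. -/
structure GoodOrd (G : SimpleGraph V) (S : Set (V × V)) : Prop where
  mem_left : ∀ ⦃a b⦄, (a, b) ∈ S → (a, a) ∈ S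
  mem_right : ∀ ⦃a b⦄, (a, b) ∈ S → (b, b) ∈ S
  antisymm : ∀ ⦃a b⦄, (a, b) ∈ S → (b, a) ∈ S → a = b
  trans : ∀ ⦃a b c⦄, (a, b) ∈ S → (b, c) ∈ S → (a, c) ∈ S
  total : ∀ ⦃a b⦄, (a, a) ∈ S → (b, b) ∈ S → (a, b) ∈ S ∨ (b, a) ∈ S
  wf : ∀ B : Set V, B.Nonempty → (∀ b ∈ B, (b, b) ∈ S) → ∃ l ∈ B, ∀ x ∈ B, (l, x) ∈ S
  clique : ∀ ⦃v x y⦄, (x, v) ∈ S → (y, v) ∈ S → x ≠ y → x ≠ v → y ≠ v →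
    G.Adj x v → G.Adj y v → G.Adj x y
  nbhd : ∀ C : Set V, (∀ c ∈ C, (c, c) ∉ S) →
    (∀ a ∈ C, ∀ b ∈ C, ReachIn G C a b) →
    ∀ ⦃k1 k2⦄, (k1, k1) ∈ S → (k2, k2) ∈ S → k1 ≠ k2 →
    (∃ c ∈ C, G.Adj k1 c) → (∃ c ∈ C, G.Adj k2 c) → G.Adj k1 k2

/-- End extension of partial orders. -/
def Ext (S S' : Set (V × V)) : Prop :=
  S ⊆ S' ∧ ∀ a b : V, (b, b) ∈ S → (a, b) ∈ S' → (a, b) ∈ S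

lemma goodOrd_empty : GoodOrd G (∅ : Set (V × V)) := by
  refine ⟨?_, ?_, ?_, ?_, ?_, ?_, ?_, ?_⟩
  · intro a b h; exact absurd h (notMem_empty _)
  · intro a b h; exact absurd h (notMem_empty _)
  · intro a b h; exact absurd h (notMem_empty _)
  · intro a b c h; exact absurd h (notMem_empty _)
  · intro a b h; exact absurd h (notMem_empty _)
  · intro B hBne hB
    obtain ⟨b, hb⟩ := hBne
    exact absurd (hB b hb) (notMem_empty _)
  · intro v x y h; exact absurd h (notMem_empty _)
  · intro C hC hconn k1 k2 h; exact absurd h (notMem_empty _)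

theorem exists_good_total (hch : Chordal G) (hfin : ∀ s : Set V, G.IsClique s → s.Finite) :
    ∃ S : Set (V × V), GoodOrd G S ∧ ∀ v : V, (v, v) ∈ S := by
  classical
  -- Zorn's lemma on good orders with end extension
  obtain ⟨M, hM⟩ : ∃ M : {S : Set (V × V) // GoodOrd G S},
      ∀ A : {S : Set (V × V) // GoodOrd G S}, Ext M.1 A.1 → Ext A.1 M.1 := by
    apply exists_maximal_of_chains_bounded (r := fun S T : {S : Set (V × V) // GoodOrd G S} =>
      Ext S.1 T.1)
    · intro c hc
      rcases Set.eq_empty_or_nonempty c with rfl | hcne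
      · exact ⟨⟨∅, goodOrd_empty⟩, by simp⟩
      -- union of the chain
      set U : Set (V × V) := {p | ∃ T ∈ c, p ∈ T.1} with hUdef
      have hsub : ∀ T ∈ c, T.1 ⊆ U := fun T hT p hp => ⟨T, hT, hp⟩
      -- any two elements of the chain are comparable; get a common upper bound in the chain
      have hdir : ∀ T1, T1 ∈ c → ∀ T2, T2 ∈ c → ∃ T ∈ c, T1.1 ⊆ T.1 ∧ T2.1 ⊆ T.1 := by
        intro T1 h1 T2 h2
        rcases eq_or_ne T1 T2 with rfl | hne
        · exact ⟨T1, h1, subset_rfl, subset_rfl⟩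
        · rcases hc h1 h2 hne with h | h
          · exact ⟨T2, h2, h.1, subset_rfl⟩
          · exact ⟨T1, h1, subset_rfl, h.1⟩
      have hUgood : GoodOrd G U := by
        refine ⟨?_, ?_, ?_, ?_, ?_, ?_, ?_, ?_⟩
        · rintro a b ⟨T, hT, hp⟩; exact hsub T hT (T.2.mem_left hp)
        · rintro a b ⟨T, hT, hp⟩; exact hsub T hT (T.2.mem_right hp)
        · rintro a b ⟨T1, h1, hp1⟩ ⟨T2, h2, hp2⟩
          obtain ⟨T, hT, hs1, hs2⟩ := hdir T1 h1 T2 h2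
          exact T.2.antisymm (hs1 hp1) (hs2 hp2)
        · rintro a b d ⟨T1, h1, hp1⟩ ⟨T2, h2, hp2⟩
          obtain ⟨T, hT, hs1, hs2⟩ := hdir T1 h1 T2 h2
          exact hsub T hT (T.2.trans (hs1 hp1) (hs2 hp2))
        · rintro a b ⟨T1, h1, hp1⟩ ⟨T2, h2, hp2⟩
          obtain ⟨T, hT, hs1, hs2⟩ := hdir T1 h1 T2 h2
          rcases T.2.total (hs1 hp1) (hs2 hp2) with h | h
          · exact Or.inl (hsub T hT h)
          · exact Or.inr (hsub T hT h)
        · intro B hBne hB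
          obtain ⟨b0, hb0⟩ := hBne
          obtain ⟨T0, hT0, hb0T⟩ := hB b0 hb0
          set B' : Set V := {x ∈ B | (x, x) ∈ T0.1} with hB'def
          have hB'ne : B'.Nonempty := ⟨b0, hb0, hb0T⟩
          obtain ⟨l, ⟨hlB, hlT⟩, hlmin⟩ := T0.2.wf B' hB'ne (fun b hb => hb.2)
          refine ⟨l, hlB, ?_⟩
          intro x hx
          obtain ⟨Tx, hTx, hxT⟩ := hB x hx
          rcases eq_or_ne T0 Tx with rfl | hne
          · exact hsub T0 hT0 (hlmin x ⟨hx, hxT⟩)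
          · rcases hc hT0 hTx hne with hord | hord
            · rcases Tx.2.total (hord.1 hlT) hxT with h | h
              · exact hsub Tx hTx h
              · have hxT0 : (x, l) ∈ T0.1 := hord.2 x l hlT h
                have : (x, x) ∈ T0.1 := T0.2.mem_left hxT0
                exact hsub T0 hT0 (hlmin x ⟨hx, this⟩)
            · have : (x, x) ∈ T0.1 := hord.1 hxT
              exact hsub T0 hT0 (hlmin x ⟨hx, this⟩)
        · rintro v x y ⟨T1, h1, hp1⟩ ⟨T2, h2, hp2⟩ hxy hxv hyv hax hay
          obtain ⟨T, hT, hs1, hs2⟩ := hdir T1 h1 T2 h2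
          exact T.2.clique (hs1 hp1) (hs2 hp2) hxy hxv hyv hax hay
        · rintro C hC hconn k1 k2 ⟨T1, h1, hp1⟩ ⟨T2, h2, hp2⟩ hne hnb1 hnb2
          obtain ⟨T, hT, hs1, hs2⟩ := hdir T1 h1 T2 h2
          refine T.2.nbhd C ?_ hconn (hs1 hp1) (hs2 hp2) hne hnb1 hnb2
          intro x hx hmem
          exact hC x hx (hsub T hT hmem)
      refine ⟨⟨U, hUgood⟩, ?_⟩
      intro T hT
      refine ⟨hsub T hT, ?_⟩
      rintro a b hbT ⟨T', hT', habT'⟩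
      rcases eq_or_ne T T' with rfl | hne
      · exact habT'
      · rcases hc hT hT' hne with hord | hord
        · exact hord.2 a b hbT habT'
        · exact hord.1 habT'
    · intro A B C hAB hBC
      refine ⟨hAB.1.trans hBC.1, ?_⟩
      intro a b hbA habC
      exact hAB.2 a b hbA (hBC.2 a b (hAB.1 hbA) habC)
  -- the maximal element has full domain
  refine ⟨M.1, M.2, ?_⟩
  by_contra hnotall
  push_neg at hnotall
  obtain ⟨v₀, hv₀⟩ := hnotall
  set X : Set V := {w | (w, w) ∉ M.1} with hXdef
  set Cs : Set V := {w | ReachIn G X v₀ w} with hCdef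
  have hCsubX : Cs ⊆ X := fun w hw => ReachIn.mem_right hw
  have hv₀C : v₀ ∈ Cs := ReachIn.refl hv₀
  -- Cs is connected
  have hCstrength : ∀ b ∈ Cs, ReachIn G Cs v₀ b := by
    intro b hb
    obtain ⟨q, m, h0, hm, hadj, hX⟩ := hb
    refine ⟨q, m, h0, hm, hadj, ?_⟩
    intro i hi
    exact ReachIn.of_prefix h0 hadj hX hi
  have hCconn : ∀ a ∈ Cs, ∀ b ∈ Cs, ReachIn G Cs a b :=
    fun a ha b hb => (hCstrength a ha).symm.trans (hCstrength b hb)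
  -- the neighbourhood K of Cs
  set K : Set V := {k | (k, k) ∈ M.1 ∧ ∃ l ∈ Cs, G.Adj k l} with hKdef
  have hKcl : ∀ k1 ∈ K, ∀ k2 ∈ K, k1 ≠ k2 → G.Adj k1 k2 := by
    intro k1 hk1 k2 hk2 hne
    exact M.2.nbhd Cs (fun l hl => hCsubX hl) hCconn hk1.1 hk2.1 hne hk1.2 hk2.2
  have hKfin : K.Finite := by
    apply hfin
    intro a ha b hb hne
    exact hKcl a ha b hb hne
  -- get a vertex of Cs complete to K
  obtain ⟨v, hvC, hvK'⟩ := exists_complete hch Cs ⟨v₀, hv₀C⟩ hCconn hKfin.toFinset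
    (fun k hk => by
      rw [Set.Finite.mem_toFinset] at hk
      intro hkC
      exact (hCsubX hkC) hk.1)
    (fun k1 h1 k2 h2 hne => hKcl k1 (by rwa [Set.Finite.mem_toFinset] at h1)
      k2 (by rwa [Set.Finite.mem_toFinset] at h2) hne)
    (fun k hk => (by rwa [Set.Finite.mem_toFinset] at hk : k ∈ K).2)
  have hvK : ∀ k ∈ K, G.Adj v k := fun k hk => hvK' k (hKfin.mem_toFinset.mpr hk)
  have hvX : (v, v) ∉ M.1 := hCsubX hvC
  -- extend M by putting v at the end
  set S' : Set (V × V) := M.1 ∪ {p : V × V | ((p.1, p.1) ∈ M.1 ∨ p.1 = v) ∧ p.2 = v}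
    with hS'def
  have hS'mem : ∀ a b : V, (a, b) ∈ S' ↔ (a, b) ∈ M.1 ∨ (((a, a) ∈ M.1 ∨ a = v) ∧ b = v) :=
    fun a b => Iff.rfl
  have hdom' : ∀ a : V, (a, a) ∈ S' ↔ (a, a) ∈ M.1 ∨ a = v := by
    intro a
    rw [hS'mem]
    constructor
    · rintro (h | ⟨h1, h2⟩)
      · exact Or.inl h
      · exact Or.inr h2
    · rintro (h | h)
      · exact Or.inl h
      · exact Or.inr ⟨Or.inr h, h⟩
  have hvv' : (v, v) ∈ S' := by rw [hdom']; exact Or.inr rfl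
  have hS'good : GoodOrd G S' := by
    refine ⟨?_, ?_, ?_, ?_, ?_, ?_, ?_, ?_⟩
    · intro a b h
      rw [hS'mem] at h
      rw [hdom']
      rcases h with h | ⟨h1 | h1, h2⟩
      · exact Or.inl (M.2.mem_left h)
      · exact Or.inl h1
      · exact Or.inr h1
    · intro a b h
      rw [hS'mem] at h
      rw [hdom']
      rcases h with h | ⟨h1, h2⟩
      · exact Or.inl (M.2.mem_right h)
      · exact Or.inr h2
    · intro a b h h'
      rw [hS'mem] at h h'
      rcases h with h | ⟨h1, h2⟩ <;> rcases h' with h' | ⟨h1', h2'⟩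
      · exact M.2.antisymm h h'
      · exfalso; rw [h2'] at h; exact hvX (M.2.mem_left h)
      · exfalso; rw [h2] at h'; exact hvX (M.2.mem_left h')
      · rw [h2, h2']
    · intro a b d h h'
      rw [hS'mem] at h h' ⊢
      rcases h with h | ⟨h1, h2⟩ <;> rcases h' with h' | ⟨h1', h2'⟩
      · exact Or.inl (M.2.trans h h')
      · exact Or.inr ⟨Or.inl (M.2.mem_left h), h2'⟩
      · exfalso; rw [h2] at h'; exact hvX (M.2.mem_left h')
      · exact Or.inr ⟨h1, h2'⟩
    · intro a b ha hb
      rw [hdom'] at ha hb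
      rw [hS'mem, hS'mem]
      rcases ha with ha | ha <;> rcases hb with hb | hb
      · rcases M.2.total ha hb with h | h
        · exact Or.inl (Or.inl h)
        · exact Or.inr (Or.inl h)
      · exact Or.inl (Or.inr ⟨Or.inl ha, hb⟩)
      · exact Or.inr (Or.inr ⟨Or.inl hb, ha⟩)
      · rw [ha, hb]; exact Or.inl ((hdom' v).mpr (Or.inr rfl))
    · intro B hBne hB
      by_cases hBM : ∃ x ∈ B, (x, x) ∈ M.1
      · obtain ⟨x0, hx0B, hx0M⟩ := hBM
        obtain ⟨l, ⟨hlB, hlM⟩, hlmin⟩ := M.2.wf {x ∈ B | (x, x) ∈ M.1} ⟨x0, hx0B, hx0M⟩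
          (fun b hb => hb.2)
        refine ⟨l, hlB, ?_⟩
        intro x hx
        have hxd := hB x hx
        rw [hdom'] at hxd
        rw [hS'mem]
        rcases hxd with h | h
        · exact Or.inl (hlmin x ⟨hx, h⟩)
        · exact Or.inr ⟨Or.inl hlM, h⟩
      · push_neg at hBM
        obtain ⟨b0, hb0⟩ := hBne
        have hallv : ∀ x ∈ B, x = v := by
          intro x hx
          have hxd := hB x hx
          rw [hdom'] at hxd
          rcases hxd with h | h
          · exact absurd h (hBM x hx)
          · exact h
        refine ⟨b0, hb0, ?_⟩
        intro x hx
        rw [hallv x hx, hallv b0 hb0]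
        exact hvv'
    · intro w x y hx hy hxy hxw hyw hax hay
      rw [hS'mem] at hx hy
      rcases hx with hx | ⟨hx1, hx2⟩ <;> rcases hy with hy | ⟨hy1, hy2⟩
      · exact M.2.clique hx hy hxy hxw hyw hax hay
      · exfalso; rw [hy2] at hx; exact hvX (M.2.mem_right hx)
      · exfalso; rw [hx2] at hy; exact hvX (M.2.mem_right hy)
      · rw [hx2] at hxw hax
        rw [hy2] at hyw hay
        rcases hx1 with hx1 | hx1
        swap
        · exact absurd hx1 hxw
        rcases hy1 with hy1 | hy1
        swap
        · exact absurd hy1 hyw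
        have hxK : x ∈ K := ⟨hx1, v, hvC, hax⟩
        have hyK : y ∈ K := ⟨hy1, v, hvC, hay⟩
        exact hKcl x hxK y hyK hxy
    · intro C hC hconn k1 k2 hk1 hk2 hne hnb1 hnb2
      rw [hdom'] at hk1 hk2
      have hCnot : ∀ l ∈ C, (l, l) ∉ M.1 := fun l hl hlM => hC l hl (Or.inl hlM)
      have hCX : ∀ l ∈ C, l ∈ X := by
        intro l hl hlM
        exact hC l hl (Or.inl hlM)
      rcases hk1 with hk1M | hk1v
      · rcases hk2 with hk2M | hk2v
        · exact M.2.nbhd C (fun l hl hlM => hC l hl (Or.inl hlM)) hconn hk1M hk2M hne hnb1 hnb2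
        · rw [hk2v] at hnb2 ⊢
          obtain ⟨c2, hc2C, hvc2⟩ := hnb2
          have hCsub : ∀ l ∈ C, l ∈ Cs := by
            intro l hl
            have h1 : ReachIn G X v₀ v := hvC
            have h2 : ReachIn G X v c2 := ReachIn.single hvc2 (hCsubX hvC) (hCX c2 hc2C)
            have h3 : ReachIn G X c2 l := (hconn c2 hc2C l hl).mono (fun z hz => hCX z hz)
            exact (h1.trans h2).trans h3
          obtain ⟨c1, hc1C, hk1c1⟩ := hnb1
          have hk1K : k1 ∈ K := ⟨hk1M, c1, hCsub c1 hc1C, hk1c1⟩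
          exact (hvK k1 hk1K).symm
      · rw [hk1v] at hnb1 ⊢
        rcases hk2 with hk2M | hk2v
        · obtain ⟨c1, hc1C, hvc1⟩ := hnb1
          have hCsub : ∀ l ∈ C, l ∈ Cs := by
            intro l hl
            have h1 : ReachIn G X v₀ v := hvC
            have h2 : ReachIn G X v c1 := ReachIn.single hvc1 (hCsubX hvC) (hCX c1 hc1C)
            have h3 : ReachIn G X c1 l := (hconn c1 hc1C l hl).mono (fun z hz => hCX z hz)
            exact (h1.trans h2).trans h3
          obtain ⟨c2, hc2C, hk2c2⟩ := hnb2
          have hk2K : k2 ∈ K := ⟨hk2M, c2, hCsub c2 hc2C, hk2c2⟩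
          exact hvK k2 hk2K
        · rw [hk1v] at hne; exact absurd hk2v.symm hne
  have hExt : Ext M.1 S' := by
    refine ⟨fun p hp => Or.inl hp, ?_⟩
    intro a b hbM hab
    rw [hS'mem] at hab
    rcases hab with h | ⟨h1, h2⟩
    · exact h
    · exfalso; rw [h2] at hbM; exact hvX hbM
  exact hvX ((hM ⟨S', hS'good⟩ hExt).1 hvv')


lemma exists_greatest {α : Type*} (R : α → α → Prop)
    (htr : ∀ a b c, R a b → R b c → R a c)
    (t : Finset α) :
    t.Nonempty → (∀ a ∈ t, ∀ b ∈ t, R a b ∨ R b a) → ∃ m ∈ t, ∀ x ∈ t, R x m := by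
  classical
  induction t using Finset.induction_on with
  | empty => intro hne _; exact absurd hne (by simp)
  | @insert a t' ha ih =>
    intro _ htot
    rcases t'.eq_empty_or_nonempty with rfl | hne'
    · refine ⟨a, by simp, ?_⟩
      intro x hx
      simp only [Finset.mem_insert, Finset.notMem_empty, or_false] at hx
      rw [hx]
      rcases htot a (by simp) a (by simp) with hh | hh <;> exact hh
    · obtain ⟨m, hm, hmax⟩ := ih hne'
        (fun p hp q hq => htot p (Finset.mem_insert_of_mem hp) q (Finset.mem_insert_of_mem hq))
      have ham : a ∈ insert a t' := Finset.mem_insert_self a t'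
      have hmm : m ∈ insert a t' := Finset.mem_insert_of_mem hm
      rcases htot a ham m hmm with hh | hh
      · refine ⟨m, hmm, ?_⟩
        intro x hx
        rcases Finset.mem_insert.mp hx with rfl | hx'
        · exact hh
        · exact hmax x hx'
      · refine ⟨a, ham, ?_⟩
        intro x hx
        rcases Finset.mem_insert.mp hx with rfl | hx'
        · rcases htot x ham x ham with h2 | h2 <;> exact h2
        · exact htr x m a (hmax x hx') hh

lemma getVert_mem_support {W : Type*} {T : SimpleGraph W} {u v : W} (p : T.Walk u v) (i : ℕ) :
    p.getVert i ∈ p.support := by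
  induction p generalizing i with
  | nil => rw [SimpleGraph.Walk.getVert_of_length_le _ (by simp)]
           exact SimpleGraph.Walk.end_mem_support _
  | cons hadj q ih =>
    cases i with
    | zero =>
      rw [SimpleGraph.Walk.getVert_zero]
      exact SimpleGraph.Walk.start_mem_support _
    | succ n =>
      rw [SimpleGraph.Walk.getVert_cons_succ, SimpleGraph.Walk.support_cons]
      exact List.mem_cons_of_mem _ (ih n)

lemma getVert_ne_of_nodup {W : Type*} {T : SimpleGraph W} {u v : W} (p : T.Walk u v)
    (hnd : p.support.Nodup) : ∀ {i j : ℕ}, i < j → j ≤ p.length →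
    p.getVert i ≠ p.getVert j := by
  induction p with
  | nil => intro i j hij hj; simp at hj; omega
  | cons hadj q ih =>
    intro i j hij hj
    rw [SimpleGraph.Walk.support_cons, List.nodup_cons] at hnd
    cases i with
    | zero =>
      intro heq
      rw [SimpleGraph.Walk.getVert_zero,
        SimpleGraph.Walk.getVert_cons q hadj (by omega)] at heq
      apply hnd.1
      rw [heq]
      exact getVert_mem_support q (j - 1)
    | succ n =>
      cases j with
      | zero => omega
      | succ mj =>
        rw [SimpleGraph.Walk.getVert_cons_succ, SimpleGraph.Walk.getVert_cons_succ]
        rw [SimpleGraph.Walk.length_cons] at hj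
        exact ih hnd.2 (by omega) (by omega)

/-- A graph in which every edge goes between a vertex and its unique "parent", where the
parent is strictly smaller in a total preorder, is acyclic. -/
lemma acyclic_of_parent {W : Type*} {T : SimpleGraph W} (R : W → W → Prop)
    (htr : ∀ a b c, R a b → R b c → R a c)
    (htot : ∀ a b, R a b ∨ R b a)
    (pa : W → W → Prop)
    (hpa_unique : ∀ a a' b, pa a b → pa a' b → a = a')
    (hedge : ∀ a b, T.Adj a b → (pa a b ∧ ¬ R b a) ∨ (pa b a ∧ ¬ R a b)) :
    T.IsAcyclic := by
  classical
  intro ov c hc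
  -- the greatest vertex on the cycle
  obtain ⟨m, hmF, hmax'⟩ := exists_greatest R htr c.support.toFinset
    ⟨ov, List.mem_toFinset.mpr c.start_mem_support⟩
    (fun a _ b _ => htot a b)
  have hm : m ∈ c.support := List.mem_toFinset.mp hmF
  have hmax : ∀ x ∈ c.support, R x m := fun x hx => hmax' x (List.mem_toFinset.mpr hx)
  set c' := c.rotate m hm with hc'def
  have hc' : c'.IsCycle := hc.rotate hm
  -- membership transfer from c' to c
  have hsupp : ∀ x, x ∈ c'.support → x ∈ c.support := by
    intro x hx
    rw [SimpleGraph.Walk.support_eq_cons] at hx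
    rcases List.mem_cons.mp hx with rfl | hx'
    · exact hm
    · have hrot := SimpleGraph.Walk.support_rotate c m hm
      have := hrot.mem_iff.mp hx'
      rw [SimpleGraph.Walk.support_eq_cons c] at *
      exact List.mem_cons_of_mem _ this
  cases hcc : c' with
  | nil => rw [hcc] at hc'; exact hc'.ne_nil rfl
  | cons hadj q =>
    -- c' = cons hadj q, hadj : T.Adj m w, q : T.Walk w m
    rw [hcc] at hc'
    have h3 := hc'.three_le_length
    rw [SimpleGraph.Walk.length_cons] at h3
    have hndq : q.support.Nodup := by
      have := hc'.support_nodup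
      rwa [SimpleGraph.Walk.support_cons, List.tail_cons] at this
    -- two distinct neighbours of m on the cycle
    set u1 := q.getVert 0 with hu1
    set u2 := q.getVert (q.length - 1) with hu2
    have hne12 : u1 ≠ u2 := getVert_ne_of_nodup q hndq (by omega) (by omega)
    have hadj1 : T.Adj m u1 := by rwa [hu1, SimpleGraph.Walk.getVert_zero]
    have hadj2 : T.Adj m u2 := by
      have := q.adj_getVert_succ (i := q.length - 1) (by omega)
      rw [show q.length - 1 + 1 = q.length by omega, SimpleGraph.Walk.getVert_length] at this
      exact this.symm
    have hmem1 : u1 ∈ c.support := by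
      apply hsupp
      rw [hcc, SimpleGraph.Walk.support_cons]
      exact List.mem_cons_of_mem _ (getVert_mem_support q 0)
    have hmem2 : u2 ∈ c.support := by
      apply hsupp
      rw [hcc, SimpleGraph.Walk.support_cons]
      exact List.mem_cons_of_mem _ (getVert_mem_support q (q.length - 1))
    have hp1 : pa u1 m := by
      rcases hedge m u1 hadj1 with ⟨h1, h2⟩ | ⟨h1, h2⟩
      · exact absurd (hmax u1 hmem1) h2
      · exact h1
    have hp2 : pa u2 m := by
      rcases hedge m u2 hadj2 with ⟨h1, h2⟩ | ⟨h1, h2⟩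
      · exact absurd (hmax u2 hmem2) h2
      · exact h1
    exact hne12 (hpa_unique u1 u2 m hp1 hp2)

end Halin

/-- Halin's theorem: a chordal graph with no infinite clique is the intersection graph
of a family of subtrees of a tree. -/
theorem stmt11 {V : Type u} (G : SimpleGraph V) (hchordal : Chordal G)
    (h : ∀ s : Set V, G.IsClique s → s.Finite) :
    ∃ (W : Type u) (T : SimpleGraph W) (t : V → Set W), T.IsTree ∧
      (∀ x : V, (T.induce (t x)).Connected) ∧
      ∀ x y : V, G.Adj x y ↔ x ≠ y ∧ (t x ∩ t y).Nonempty := by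
  classical
  obtain ⟨S, hS, hSall⟩ := Halin.exists_good_total hchordal h
  -- left neighbourhoods are finite cliques
  set leftN : V → Set V := fun v => {u | G.Adj u v ∧ (u, v) ∈ S ∧ u ≠ v} with hleftNdef
  have hleftN_cl : ∀ v, G.IsClique (leftN v) := by
    intro v a ha b hb hne
    exact hS.clique ha.2.1 hb.2.1 hne ha.2.2 hb.2.2 ha.1 hb.1
  have hleftN_fin : ∀ v, (leftN v).Finite := fun v => h _ (hleftN_cl v)
  -- greatest element of a nonempty left neighbourhood
  have hparEx : ∀ v : V, (leftN v).Nonempty → ∃ g ∈ leftN v, ∀ x ∈ leftN v, (x, g) ∈ S := by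
    intro v hne
    obtain ⟨g, hg, hgmax⟩ := Halin.exists_greatest (R := fun a b => (a, b) ∈ S)
      (fun a b c hab hbc => hS.trans hab hbc) (hleftN_fin v).toFinset
      (by rwa [Set.Finite.toFinset_nonempty])
      (fun a _ b _ => hS.total (hSall a) (hSall b))
    exact ⟨g, (Set.Finite.mem_toFinset _).mp hg,
      fun x hx => hgmax x ((Set.Finite.mem_toFinset _).mpr hx)⟩
  -- the parent function
  set par : V → Option V := fun v =>
    if hne : (leftN v).Nonempty then some (hparEx v hne).choose else none with hpardef
  have hpar_some : ∀ v g, par v = some g → g ∈ leftN v ∧ ∀ x ∈ leftN v, (x, g) ∈ S := by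
    intro v g hg
    rw [hpardef] at hg
    simp only [] at hg
    split_ifs at hg with hne
    · obtain ⟨hmem, hmax⟩ := (hparEx v hne).choose_spec
      rw [Option.some_inj] at hg
      rw [← hg]
      exact ⟨hmem, hmax⟩
  have hpar_ne : ∀ v, (leftN v).Nonempty → ∃ g, par v = some g := by
    intro v hne
    rw [hpardef]
    simp only []
    rw [dif_pos hne]
    exact ⟨_, rfl⟩
  -- the tree
  set TA : Option V → Option V → Prop := fun a b =>
    (∃ w, a = some w ∧ par w = b) ∨ (∃ w, b = some w ∧ par w = a) with hTAdef
  have hTAsymm : ∀ a b, TA a b → TA b a := fun a b hab => Or.symm hab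
  have hTAirr : ∀ a, ¬ TA a a := by
    intro a hA
    rcases hA with ⟨w, hw1, hw2⟩ | ⟨w, hw1, hw2⟩ <;>
    · rw [hw1] at hw2
      exact (hpar_some w w hw2).1.2.2 rfl
  set T : SimpleGraph (Option V) :=
    ⟨fun a b => TA a b, ⟨fun a b hab => hTAsymm a b hab⟩, ⟨fun a hA => hTAirr a hA⟩⟩ with hTdef
  have hTadj : ∀ a b, T.Adj a b ↔ TA a b := fun a b => Iff.rfl
  have hedge_par : ∀ w : V, T.Adj (some w) (par w) := fun w => Or.inl ⟨w, rfl, rfl⟩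
  -- strict order is well-founded
  have hacc : ∀ w : V, Acc (fun a b : V => (a, b) ∈ S ∧ a ≠ b) w := by
    by_contra hc
    push_neg at hc
    obtain ⟨w0, hw0⟩ := hc
    obtain ⟨l, hlB, hlmin⟩ := hS.wf {w | ¬ Acc (fun a b : V => (a, b) ∈ S ∧ a ≠ b) w}
      ⟨w0, hw0⟩ (fun b _ => hSall b)
    apply hlB
    constructor
    intro y hy
    by_contra hyacc
    exact hy.2 (hS.antisymm hy.1 (hlmin y hyacc))
  have hwf : WellFounded (fun a b : V => (a, b) ∈ S ∧ a ≠ b) := ⟨hacc⟩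
  -- the subtrees
  set t : V → Set (Option V) := fun x =>
    {p | p = some x ∨ ∃ u, p = some u ∧ G.Adj x u ∧ (x, u) ∈ S ∧ x ≠ u} with htdef
  have htx : ∀ x : V, (some x : Option V) ∈ t x := fun x => Or.inl rfl
  refine ⟨Option V, T, t, ⟨?_, ?_⟩, ?_, ?_⟩
  · -- connected
    have hreach : ∀ v : V, T.Reachable (some v) none := by
      intro v
      refine hwf.induction (C := fun v => T.Reachable (some v) none) v ?_
      intro x ih
      cases hp : par x with
      | none =>
        have := hedge_par x
        rw [hp] at this
        exact this.reachable
      | some u =>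
        have hu := (hpar_some x u hp).1
        have hadj : T.Adj (some x) (some u) := by
          have := hedge_par x
          rwa [hp] at this
        exact hadj.reachable.trans (ih u ⟨hu.2.1, hu.2.2⟩)
    have hreach' : ∀ a : Option V, T.Reachable a none := by
      intro a
      cases a with
      | none => exact SimpleGraph.Reachable.refl none
      | some v => exact hreach v
    haveI : Nonempty (Option V) := ⟨none⟩
    exact ⟨fun a b => (hreach' a).trans (hreach' b).symm⟩
  · -- acyclic
    apply Halin.acyclic_of_parent (R := fun a b : Option V =>
      match a, b with
      | none, _ => True
      | some _, none => False
      | some x, some y => (x, y) ∈ S)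
      (pa := fun a b : Option V => ∃ w, b = some w ∧ par w = a)
    · intro a b c hab hbc
      match a, b, c with
      | none, _, _ => trivial
      | some x, none, _ => exact absurd hab (by simp)
      | some x, some y, none => exact absurd hbc (by simp)
      | some x, some y, some z => exact hS.trans hab hbc
    · intro a b
      match a, b with
      | none, _ => exact Or.inl trivial
      | some x, none => exact Or.inr trivial
      | some x, some y => exact hS.total (hSall x) (hSall y)
    · rintro a a' b ⟨w, hb, hw⟩ ⟨w', hb', hw'⟩
      rw [hb] at hb'
      rw [Option.some_inj] at hb'
      rw [← hb'] at hw'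
      rw [← hw, ← hw']
    · intro a b hab
      rcases hab with ⟨w, ha, hw⟩ | ⟨w, hb, hw⟩
      · -- a = some w, par w = b : b is the parent of a
        refine Or.inr ⟨⟨w, ha, hw⟩, ?_⟩
        rw [ha]
        cases hb : b with
        | none => simp
        | some u =>
          rw [hb] at hw
          have hu := (hpar_some w u hw).1
          intro hcon
          exact hu.2.2 (hS.antisymm hu.2.1 hcon)
      · refine Or.inl ⟨⟨w, hb, hw⟩, ?_⟩
        rw [hb]
        cases ha : a with
        | none => simp
        | some u =>
          rw [ha] at hw
          have hu := (hpar_some w u hw).1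
          intro hcon
          exact hu.2.2 (hS.antisymm hu.2.1 hcon)
  · -- subtrees connected
    intro x
    haveI : Nonempty ↥(t x) := ⟨⟨some x, htx x⟩⟩
    have key : ∀ v : V, ∀ hv : (some v : Option V) ∈ t x,
        (T.induce (t x)).Reachable ⟨some v, hv⟩ ⟨some x, htx x⟩ := by
      intro v
      refine hwf.induction
        (C := fun v => ∀ hv : (some v : Option V) ∈ t x,
          (T.induce (t x)).Reachable ⟨some v, hv⟩ ⟨some x, htx x⟩) v ?_
      intro w ih hw
      rcases hw with hwx | ⟨u, huw, hadj, huS, hune⟩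
      · rw [Option.some_inj] at hwx
        subst hwx
        exact SimpleGraph.Reachable.refl _
      · rw [Option.some_inj] at huw
        subst huw
        have hxln : x ∈ leftN w := ⟨hadj, huS, hune⟩
        obtain ⟨g, hpg⟩ := hpar_ne w ⟨x, hxln⟩
        obtain ⟨hgmem, hgmax⟩ := hpar_some w g hpg
        have hedge : T.Adj (some w) (some g) := by
          have := hedge_par w
          rwa [hpg] at this
        by_cases hgx : g = x
        · rw [hgx] at hedge
          have hstep : (T.induce (t x)).Adj ⟨some w, Or.inr ⟨w, rfl, hadj, huS, hune⟩⟩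
            ⟨some x, htx x⟩ := hedge
          exact hstep.reachable
        · have hxgne : x ≠ g := fun hh => hgx hh.symm
          have hxg : G.Adj x g := hS.clique huS hgmem.2.1 hxgne hune hgmem.2.2 hadj hgmem.1
          have hxgS : (x, g) ∈ S := hgmax x hxln
          have hgt : (some g : Option V) ∈ t x := Or.inr ⟨g, rfl, hxg, hxgS, hxgne⟩
          have hrg := ih g ⟨hgmem.2.1, hgmem.2.2⟩ hgt
          have hstep : (T.induce (t x)).Adj ⟨some w, Or.inr ⟨w, rfl, hadj, huS, hune⟩⟩
            ⟨some g, hgt⟩ := hedge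
          exact hstep.reachable.trans hrg
    have hball : ∀ A : ↥(t x), (T.induce (t x)).Reachable A ⟨some x, htx x⟩ := by
      rintro ⟨p, hp⟩
      have hpsome : ∃ u, p = some u ∧ (some u : Option V) ∈ t x ∧
          (some u : Option V) = p := by
        rcases hp with h1 | ⟨u, hu, rest⟩
        · exact ⟨x, h1, htx x, h1.symm⟩
        · exact ⟨u, hu, Or.inr ⟨u, rfl, rest⟩, hu.symm⟩
      obtain ⟨u, rfl, hu, -⟩ := hpsome
      exact key u hu
    exact ⟨fun A B => (hball A).trans (hball B).symm⟩
  · -- adjacency iff intersecting subtrees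
    intro x y
    constructor
    · intro hadj
      have hne : x ≠ y := hadj.ne
      refine ⟨hne, ?_⟩
      rcases hS.total (hSall x) (hSall y) with hxy | hyx
      · exact ⟨some y, Or.inr ⟨y, rfl, hadj, hxy, hne⟩, Or.inl rfl⟩
      · exact ⟨some x, Or.inl rfl, Or.inr ⟨x, rfl, hadj.symm, hyx, fun hh => hne hh.symm⟩⟩
    · rintro ⟨hne, p, hpx, hpy⟩
      rcases hpx with h1 | ⟨u, hu, hxu, hxuS, hxune⟩
      · rcases hpy with h2 | ⟨u', hu', hyu', hyuS, hyune⟩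
        · rw [h1] at h2
          rw [Option.some_inj] at h2
          exact absurd h2 hne
        · rw [h1] at hu'
          rw [Option.some_inj] at hu'
          rw [← hu'] at hyu'
          exact hyu'.symm
      · rcases hpy with h2 | ⟨u', hu', hyu', hyuS, hyune⟩
        · rw [h2] at hu
          rw [Option.some_inj] at hu
          rw [← hu] at hxu
          exact hxu
        · rw [hu] at hu'
          rw [Option.some_inj] at hu'
          rw [← hu'] at hyu' hyuS hyune
          exact hS.clique hxuS hyuS hne hxune hyune hxu hyu'
end

section
/- Let F be a family of subsets of W and suppose there exist distinct v₁, v₂, v₃ ∈ W and F-connected sets X₁, X₂, X₃ ⊆ W such that v_i ∈ X_j iff i ≠ j for all i, j ∈ {1,2,3}. Then there is no linear order on W under which every member of F is an interval. -/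
open Set

universe u

lemma mid_lemma {W : Type u} {F : Set (Set W)} {X : Set W} (hX : FConnected F X)
    {r : W → W → Prop} (lin : IsLinearOrder W r)
    (hint : ∀ S ∈ F, ∀ a b c : W, r a b → r b c → a ∈ S → c ∈ S → b ∈ S)
    {v a b : W} (hv : v ∉ X) (ha : a ∈ X) (hb : b ∈ X)
    (hav : r a v) (hvb : r v b) : False := by
  have hU : {x ∈ X | r x v} ∪ {x ∈ X | r v x} = X := by
    ext x
    constructor
    · rintro (⟨hx, _⟩ | ⟨hx, _⟩) <;> exact hx
    · intro hx
      rcases lin.total x v with h | h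
      · exact Or.inl ⟨hx, h⟩
      · exact Or.inr ⟨hx, h⟩
  have hD : {x ∈ X | r x v} ∩ {x ∈ X | r v x} = ∅ := by
    ext x
    simp only [Set.mem_inter_iff, Set.mem_setOf_eq, Set.mem_empty_iff_false, iff_false]
    rintro ⟨⟨hx, h1⟩, ⟨_, h2⟩⟩
    exact hv (lin.antisymm x v h1 h2 ▸ hx)
  obtain ⟨S, hSF, hSX, ⟨p, hpS, hpX, hpv⟩, ⟨q, hqS, hqX, hqv⟩⟩ :=
    hX {x ∈ X | r x v} {x ∈ X | r v x} hU hD ⟨a, ha, hav⟩ ⟨b, hb, hvb⟩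
  exact hv (hSX (hint S hSF p v q hpv hqv hpS hqS))

/-- The easy direction: an asteroidal triple of vertices and `F`-connected sets rules out
any linear order on `W` making every member of `F` an interval. -/
theorem stmt13 {W : Type u} (F : Set (Set W)) (v₁ v₂ v₃ : W) (X₁ X₂ X₃ : Set W)
    (h12 : v₁ ≠ v₂) (h13 : v₁ ≠ v₃) (h23 : v₂ ≠ v₃)
    (hX₁ : FConnected F X₁) (hX₂ : FConnected F X₂) (hX₃ : FConnected F X₃)
    (h11 : v₁ ∉ X₁) (h12' : v₁ ∈ X₂) (h13' : v₁ ∈ X₃)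
    (h21 : v₂ ∈ X₁) (h22 : v₂ ∉ X₂) (h23' : v₂ ∈ X₃)
    (h31 : v₃ ∈ X₁) (h32 : v₃ ∈ X₂) (h33 : v₃ ∉ X₃) :
    ¬ ∃ r : W → W → Prop, IsLinearOrder W r ∧
        ∀ S ∈ F, ∀ a b c : W, r a b → r b c → a ∈ S → c ∈ S → b ∈ S := by
  rintro ⟨r, lin, hint⟩
  rcases lin.total v₁ v₂ with a12 | a21 <;>
  rcases lin.total v₂ v₃ with a23 | a32 <;>
  rcases lin.total v₁ v₃ with a13 | a31
  · exact mid_lemma hX₂ lin hint h22 h12' h32 a12 a23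
  · exact mid_lemma hX₂ lin hint h22 h12' h32 a12 a23
  · exact mid_lemma hX₃ lin hint h33 h13' h23' a13 a32
  · exact mid_lemma hX₁ lin hint h11 h31 h21 a31 a12
  · exact mid_lemma hX₁ lin hint h11 h21 h31 a21 a13
  · exact mid_lemma hX₃ lin hint h33 h23' h13' a23 a31
  · exact mid_lemma hX₁ lin hint h11 h21 h31 a21 a13
  · exact mid_lemma hX₂ lin hint h22 h32 h12' a32 a21
end

section
/- Let k ≥ 0 be an integer and let G be a (possibly infinite) graph such that every finite subgraph of G has path-width at most k. Then G has line-width at most k. -/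
open Set

universe u

noncomputable section Stmt14Aux
open Filter
open scoped Classical
namespace Stmt14
variable {V : Type u}

def uf (V : Type u) : Ultrafilter (Finset V) := Ultrafilter.of Filter.atTop

theorem memU (U₀ : Finset V) : {U : Finset V | U₀ ⊆ U} ∈ uf V :=
  Filter.le_def.mp (Ultrafilter.of_le _) _ (Filter.mem_atTop U₀)

theorem mem_mono {s t : Set (Finset V)} (h : s ∈ uf V) (hst : s ⊆ t) : t ∈ uf V :=
  Filter.mem_of_superset h hst

theorem mem_inter {s t : Set (Finset V)} (hs : s ∈ uf V) (ht : t ∈ uf V) : s ∩ t ∈ uf V :=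
  Filter.inter_mem hs ht

/-- totality helper -/
theorem total_nat (f g : Finset V → ℕ) :
    {U | f U ≤ g U} ∈ uf V ∨ {U | g U ≤ f U} ∈ uf V := by
  rcases Ultrafilter.em (uf V) (fun U => f U ≤ g U) with hm | hm
  · exact Or.inl hm
  · exact Or.inr (mem_mono hm fun U hU => le_of_not_ge hU)

variable (n : Finset V → ℕ) (B : ∀ U : Finset V, Fin (n U) → Finset (↑U : Set V))

def idxS (U : Finset V) (v : V) : Finset (Fin (n U)) :=
  Finset.univ.filter fun i => ∃ hv : v ∈ (↑U : Set V), (⟨v, hv⟩ : (↑U : Set V)) ∈ B U i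

def aN (U : Finset V) (v : V) : ℕ :=
  if h : (idxS n B U v).Nonempty then ((idxS n B U v).min' h : ℕ) else 0

def bN (U : Finset V) (v : V) : ℕ :=
  if h : (idxS n B U v).Nonempty then ((idxS n B U v).max' h : ℕ) else 0

def pa (v w : V) : Prop := {U | aN n B U v ≤ aN n B U w} ∈ uf V
def pb (v w : V) : Prop := {U | bN n B U v ≤ bN n B U w} ∈ uf V

def ble (v w : V) : Prop := WellOrderingRel v w ∨ v = w

def rel (v w : V) : Prop :=
  pa n B v w ∧ (pa n B w v → (pb n B v w ∧ (pb n B w v → ble v w)))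

def bagSet (v : V) : Set V :=
  {u | {U | u ∈ U ∧ v ∈ U ∧ aN n B U u ≤ aN n B U v ∧ aN n B U v ≤ bN n B U u} ∈ uf V}

-- ble is a linear order
theorem ble_refl (v : V) : ble v v := Or.inr rfl
theorem ble_total (v w : V) : ble v w ∨ ble w v := by
  rcases trichotomous_of WellOrderingRel v w with h | h | h
  · exact Or.inl (Or.inl h)
  · exact Or.inl (Or.inr h)
  · exact Or.inr (Or.inl h)
theorem ble_antisymm {v w : V} (h1 : ble v w) (h2 : ble w v) : v = w := by
  rcases h1 with h1 | h1
  · rcases h2 with h2 | h2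
    · exact absurd (_root_.trans h1 h2) (irrefl_of WellOrderingRel v)
    · exact h2.symm
  · exact h1
theorem ble_trans {u v w : V} (h1 : ble u v) (h2 : ble v w) : ble u w := by
  rcases h1 with h1 | rfl
  · rcases h2 with h2 | rfl
    · exact Or.inl (_root_.trans h1 h2)
    · exact Or.inl h1
  · exact h2

variable {n B}

theorem pa_refl (v : V) : pa n B v v :=
  mem_mono Filter.univ_mem fun U _ => show aN n B U v ≤ aN n B U v from le_rfl

theorem pa_trans {u v w : V} (h1 : pa n B u v) (h2 : pa n B v w) : pa n B u w :=
  mem_mono (mem_inter h1 h2) fun U hU =>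
    show aN n B U u ≤ aN n B U w from le_trans hU.1 hU.2

theorem pb_refl (v : V) : pb n B v v :=
  mem_mono Filter.univ_mem fun U _ => show bN n B U v ≤ bN n B U v from le_rfl

theorem pb_trans {u v w : V} (h1 : pb n B u v) (h2 : pb n B v w) : pb n B u w :=
  mem_mono (mem_inter h1 h2) fun U hU =>
    show bN n B U u ≤ bN n B U w from le_trans hU.1 hU.2

theorem pa_total (v w : V) : pa n B v w ∨ pa n B w v := total_nat _ _
theorem pb_total (v w : V) : pb n B v w ∨ pb n B w v := total_nat _ _

theorem rel_refl (v : V) : rel n B v v :=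
  ⟨pa_refl v, fun _ => ⟨pb_refl v, fun _ => ble_refl v⟩⟩

theorem rel_trans {u v w : V} (h1 : rel n B u v) (h2 : rel n B v w) : rel n B u w := by
  obtain ⟨hauv, huv⟩ := h1
  obtain ⟨havw, hvw⟩ := h2
  refine ⟨pa_trans hauv havw, fun hawu => ?_⟩
  have havu : pa n B v u := pa_trans havw hawu
  have hawv : pa n B w v := pa_trans hawu hauv
  obtain ⟨hbuv, huv'⟩ := huv havu
  obtain ⟨hbvw, hvw'⟩ := hvw hawv
  refine ⟨pb_trans hbuv hbvw, fun hbwu => ?_⟩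
  exact ble_trans (huv' (pb_trans hbvw hbwu)) (hvw' (pb_trans hbwu hbuv))

theorem rel_antisymm {v w : V} (h1 : rel n B v w) (h2 : rel n B w v) : v = w := by
  obtain ⟨havw, hvw⟩ := h1
  obtain ⟨hawv, hwv⟩ := h2
  obtain ⟨hbvw, hvw'⟩ := hvw hawv
  obtain ⟨hbwv, hwv'⟩ := hwv havw
  exact ble_antisymm (hvw' hbwv) (hwv' hbvw)

theorem rel_total (v w : V) : rel n B v w ∨ rel n B w v := by
  by_cases h1 : pa n B v w
  · by_cases h2 : pa n B w v
    · by_cases h3 : pb n B v w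
      · by_cases h4 : pb n B w v
        · rcases ble_total v w with hc | hc
          · exact Or.inl ⟨h1, fun _ => ⟨h3, fun _ => hc⟩⟩
          · exact Or.inr ⟨h2, fun _ => ⟨h4, fun _ => hc⟩⟩
        · exact Or.inl ⟨h1, fun _ => ⟨h3, fun h => absurd h h4⟩⟩
      · have h4 : pb n B w v := (pb_total v w).resolve_left h3
        exact Or.inr ⟨h2, fun _ => ⟨h4, fun h => absurd h h3⟩⟩
    · exact Or.inl ⟨h1, fun h => absurd h h2⟩
  · have h2 : pa n B w v := (pa_total v w).resolve_left h1
    exact Or.inr ⟨h2, fun h => absurd h h1⟩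

theorem rel_isLinearOrder : IsLinearOrder V (rel n B) :=
  { refl := rel_refl, trans := fun _ _ _ => rel_trans, antisymm := fun _ _ => rel_antisymm,
    total := rel_total }


-- facts about idxS / aN / bN

theorem aN_le_of_mem {U : Finset V} {v : V} {i : Fin (n U)} (hi : i ∈ idxS n B U v) :
    aN n B U v ≤ (i : ℕ) := by
  have hne : (idxS n B U v).Nonempty := ⟨i, hi⟩
  rw [aN, dif_pos hne]
  exact Fin.le_def.mp (Finset.min'_le _ _ hi)

theorem le_bN_of_mem {U : Finset V} {v : V} {i : Fin (n U)} (hi : i ∈ idxS n B U v) :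
    (i : ℕ) ≤ bN n B U v := by
  have hne : (idxS n B U v).Nonempty := ⟨i, hi⟩
  rw [bN, dif_pos hne]
  exact Fin.le_def.mp (Finset.le_max' _ _ hi)

theorem aN_le_bN {U : Finset V} {v : V} (hne : (idxS n B U v).Nonempty) :
    aN n B U v ≤ bN n B U v := by
  have := aN_le_of_mem (n := n) (B := B) ((idxS n B U v).max'_mem hne)
  rwa [bN, dif_pos hne]

theorem idxS_nonempty {G : SimpleGraph V}
    (hdec : ∀ U : Finset V, IsPathDecomp (G.induce (↑U : Set V)) (B U))
    {U : Finset V} {v : V} (hv : v ∈ (↑U : Set V)) : (idxS n B U v).Nonempty := by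
  obtain ⟨i, hi⟩ := (hdec U).1 ⟨v, hv⟩
  exact ⟨i, Finset.mem_filter.mpr ⟨Finset.mem_univ _, hv, hi⟩⟩

theorem mem_idxS_of_between {U : Finset V} {v : V} (hne : (idxS n B U v).Nonempty)
    (hdec3 : ∀ (x : (↑U : Set V)) (i i' i'' : Fin (n U)),
      i ≤ i' → i' ≤ i'' → x ∈ B U i → x ∈ B U i'' → x ∈ B U i')
    {i : Fin (n U)} (h1 : aN n B U v ≤ (i : ℕ)) (h2 : (i : ℕ) ≤ bN n B U v) :
    i ∈ idxS n B U v := by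
  have hmin := (idxS n B U v).min'_mem hne
  have hmax := (idxS n B U v).max'_mem hne
  simp only [idxS, Finset.mem_filter] at hmin hmax ⊢
  obtain ⟨-, hv, hm1⟩ := hmin
  obtain ⟨-, hv2, hm2⟩ := hmax
  refine ⟨Finset.mem_univ _, hv, ?_⟩
  refine hdec3 ⟨v, hv⟩ _ i _ ?_ ?_ hm1 hm2
  · rw [aN, dif_pos hne] at h1; exact Fin.le_def.mpr h1
  · rw [bN, dif_pos hne] at h2; exact Fin.le_def.mpr h2

theorem edge_common {G : SimpleGraph V}
    (hdec : ∀ U : Finset V, IsPathDecomp (G.induce (↑U : Set V)) (B U))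
    {U : Finset V} {u v : V} (hu : u ∈ (↑U : Set V)) (hv : v ∈ (↑U : Set V))
    (hadj : G.Adj u v) : ∃ i, i ∈ idxS n B U u ∧ i ∈ idxS n B U v := by
  obtain ⟨i, h1, h2⟩ := (hdec U).2.1 ⟨u, hu⟩ ⟨v, hv⟩ hadj
  exact ⟨i, Finset.mem_filter.mpr ⟨Finset.mem_univ _, hu, h1⟩,
    Finset.mem_filter.mpr ⟨Finset.mem_univ _, hv, h2⟩⟩

theorem main {G : SimpleGraph V} {k : ℕ}
    (hdec : ∀ U : Finset V, IsPathDecomp (G.induce (↑U : Set V)) (B U))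
    (hcard : ∀ U i, (B U i).card ≤ k + 1) : LineWidthLE G k := by
  classical
  -- every finite subset of a bag has at most k+1 elements
  have hbound : ∀ (v : V) (s : Finset V), ↑s ⊆ bagSet n B v → s.card ≤ k + 1 := by
    intro v s hs
    rcases s.eq_empty_or_nonempty with rfl | ⟨u₀, hu₀⟩
    · simp
    · have hT : (⋂ u ∈ s, {U : Finset V | u ∈ U ∧ v ∈ U ∧
          aN n B U u ≤ aN n B U v ∧ aN n B U v ≤ bN n B U u}) ∈ uf V :=
        (Filter.biInter_finset_mem s).mpr fun u hu => hs hu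
      obtain ⟨U, hU⟩ := Ultrafilter.nonempty_of_mem hT
      simp only [Set.mem_iInter, Set.mem_setOf_eq] at hU
      have hvU : v ∈ (↑U : Set V) := Finset.mem_coe.mpr (hU u₀ hu₀).2.1
      have hne : (idxS n B U v).Nonempty := idxS_nonempty hdec hvU
      have hiv : ((idxS n B U v).min' hne : ℕ) = aN n B U v := by rw [aN, dif_pos hne]
      have hsub : s ⊆ (B U ((idxS n B U v).min' hne)).image Subtype.val := by
        intro u hu
        obtain ⟨huU, hvU', h1, h2⟩ := hU u hu
        have huU' : u ∈ (↑U : Set V) := Finset.mem_coe.mpr huU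
        have hmem : (idxS n B U v).min' hne ∈ idxS n B U u :=
          mem_idxS_of_between (idxS_nonempty hdec huU') (hdec U).2.2
            (by rw [hiv]; exact h1) (by rw [hiv]; exact h2)
        simp only [idxS, Finset.mem_filter] at hmem
        obtain ⟨-, hu', hmem⟩ := hmem
        exact Finset.mem_image.mpr ⟨⟨u, hu'⟩, hmem, rfl⟩
      calc s.card ≤ ((B U ((idxS n B U v).min' hne)).image Subtype.val).card :=
            Finset.card_le_card hsub
        _ ≤ (B U ((idxS n B U v).min' hne)).card := Finset.card_image_le
        _ ≤ k + 1 := hcard U _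
  have hfin : ∀ v, (bagSet n B v).Finite := by
    intro v
    by_contra hinf
    obtain ⟨t, hts, htc⟩ := Set.Infinite.exists_subset_card_eq hinf (k + 2)
    have := hbound v t hts
    omega
  refine ⟨V, rel n B, rel_isLinearOrder, fun v => (hfin v).toFinset, ?_, ?_, ?_, ?_⟩
  · -- vertex cover
    intro v
    refine ⟨v, (hfin v).mem_toFinset.mpr ?_⟩
    refine mem_mono (memU {v}) fun U hU => ?_
    have hvU : v ∈ U := Finset.singleton_subset_iff.mp hU
    have hne : (idxS n B U v).Nonempty := idxS_nonempty hdec (Finset.mem_coe.mpr hvU)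
    exact ⟨hvU, hvU, le_rfl, aN_le_bN hne⟩
  · -- edge cover
    intro u v hadj
    have hEdge : {U : Finset V | u ∈ U ∧ v ∈ U} ∈ uf V := by
      refine mem_mono (memU {u, v}) fun U hU => ?_
      rw [Set.mem_setOf_eq, Finset.insert_subset_iff, Finset.singleton_subset_iff] at *
      exact hU
    rcases total_nat (fun U => aN n B U u) (fun U => aN n B U v) with hA | hA
    · refine ⟨v, (hfin v).mem_toFinset.mpr ?_, (hfin v).mem_toFinset.mpr ?_⟩
      · refine mem_mono (mem_inter hEdge hA) ?_
        rintro U ⟨⟨huU, hvU⟩, hle⟩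
        obtain ⟨i, hiu, hiv⟩ :=
          edge_common hdec (Finset.mem_coe.mpr huU) (Finset.mem_coe.mpr hvU) hadj
        exact ⟨huU, hvU, hle, le_trans (aN_le_of_mem hiv) (le_bN_of_mem hiu)⟩
      · refine mem_mono hEdge ?_
        rintro U ⟨huU, hvU⟩
        have hne : (idxS n B U v).Nonempty := idxS_nonempty hdec (Finset.mem_coe.mpr hvU)
        exact ⟨hvU, hvU, le_rfl, aN_le_bN hne⟩
    · refine ⟨u, (hfin u).mem_toFinset.mpr ?_, (hfin u).mem_toFinset.mpr ?_⟩
      · refine mem_mono hEdge ?_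
        rintro U ⟨huU, hvU⟩
        have hne : (idxS n B U u).Nonempty := idxS_nonempty hdec (Finset.mem_coe.mpr huU)
        exact ⟨huU, huU, le_rfl, aN_le_bN hne⟩
      · refine mem_mono (mem_inter hEdge hA) ?_
        rintro U ⟨⟨huU, hvU⟩, hle⟩
        obtain ⟨i, hiu, hiv⟩ :=
          edge_common hdec (Finset.mem_coe.mpr huU) (Finset.mem_coe.mpr hvU) hadj
        exact ⟨hvU, huU, hle, le_trans (aN_le_of_mem hiu) (le_bN_of_mem hiv)⟩
  · -- convexity
    intro x i i' i'' h1 h2 hx hx''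
    rw [Set.Finite.mem_toFinset] at hx hx'' ⊢
    refine mem_mono
      (mem_inter (mem_inter (mem_inter (mem_inter hx hx'') h1.1) h2.1) (memU {i'})) ?_
    rintro U ⟨⟨⟨⟨⟨hxU, hiU, ha1, hb1⟩, ⟨hxU', hiU'', ha2, hb2⟩⟩, hle1⟩, hle2⟩, hsub⟩
    refine ⟨hxU, Finset.singleton_subset_iff.mp hsub, le_trans ha1 hle1, le_trans hle2 hb2⟩
  · -- cardinality
    intro v
    exact hbound v _ (by rw [Set.Finite.coe_toFinset])

end Stmt14
end Stmt14Aux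

/-- If every finite subgraph of `G` has path-width at most `k`, then `G` has line-width
at most `k`. -/
theorem stmt14 {V : Type u} (G : SimpleGraph V) (k : ℕ)
    (h : ∀ U : Finset V, PathWidthLE (G.induce (↑U : Set V)) k) :
    LineWidthLE G k := by
  classical
  choose n B hdec hcard using h
  exact Stmt14.main hdec hcard
end

section
/- Let T be a tree with vertex set W, and let F be a family of subsets of W each of which induces a connected subgraph of T. Then the intersection graph of F is chordal. -/
open Set

universe u

open SimpleGraph in
/-- Along a walk all of whose edges lie entirely in `A` or entirely in `C`,
with `A` and `C` disjoint, membership in `A` propagates to the endpoint. -/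
lemma aux_walk_AC {V : Type u} {G : SimpleGraph V} {A C : Set V} (hAC : A ∩ C = ∅) :
    ∀ {x y : V} (w : G.Walk x y),
      (∀ e ∈ w.edges, (∀ v ∈ e, v ∈ A) ∨ (∀ v ∈ e, v ∈ C)) → x ∈ A → y ∈ A := by
  intro x y w
  induction w with
  | nil => exact fun _ hx => hx
  | cons hadj p ih =>
    intro he hx
    rw [SimpleGraph.Walk.edges_cons] at he
    rcases he _ List.mem_cons_self with hA | hC
    · exact ih (fun e hep => he e (List.mem_cons_of_mem _ hep)) (hA _ (Sym2.mem_mk_right _ _))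
    · exact absurd (Set.mem_inter hx (hC _ (Sym2.mem_mk_left _ _)))
        (by rw [hAC]; exact Set.notMem_empty _)

open SimpleGraph in
/-- In an acyclic graph, every edge of a path from `x` to `y` belongs to every
walk from `x` to `y`. -/
lemma aux_path_edges_subset {V : Type u} {G : SimpleGraph V} (hG : G.IsAcyclic) :
    ∀ {x y : V} (P : G.Walk x y), P.IsPath → ∀ (w : G.Walk x y), ∀ e ∈ P.edges, e ∈ w.edges := by
  haveI := Classical.decEq V
  intro x y P
  induction P with
  | nil => simp
  | @cons x v y hxv P ih =>
    intro hP w e he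
    have hP2 : P.IsPath := hP.of_cons
    have hxs : x ∉ P.support := ((Walk.cons_isPath_iff hxv P).mp hP).2
    have hbridge : G.IsBridge s(x, v) :=
      (isAcyclic_iff_forall_adj_isBridge.mp hG) hxv
    have hmem : s(x, v) ∈ w.edges := by
      have hall := isBridge_iff_adj_and_forall_walk_mem_edges.mp hbridge
      have := hall (w.append P.reverse)
      rw [Walk.edges_append] at this
      rcases List.mem_append.mp this with h1 | h2
      · exact h1
      · exfalso
        rw [Walk.edges_reverse, List.mem_reverse] at h2
        exact hxs (P.fst_mem_support_of_mem_edges h2)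
    have hv : v ∈ w.support := w.snd_mem_support_of_mem_edges hmem
    rw [Walk.edges_cons] at he
    rcases List.mem_cons.mp he with rfl | he2
    · exact hmem
    · exact (w.edges_dropUntil_subset hv) (ih hP2 (w.dropUntil v hv) e he2)

/-- The intersection graph of a family of vertex sets of subtrees of a tree is chordal. -/
theorem stmt19 {W : Type u} (T : SimpleGraph W) (hT : T.IsTree)
    (F : Set (Set W))
    (h : ∀ S ∈ F, (T.induce S).Connected) :
    ChordalProp F := by
  rintro ⟨n, hn4, f, hinj, hadj⟩
  haveI : NeZero n := ⟨by omega⟩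
  haveI := Classical.decEq W
  set S : ZMod n → Set W := fun i => (f i : Set W) with hSdef
  -- basic cast fact
  have hcast : ∀ a b : ℕ, a < n → b < n → ((a : ZMod n) = (b : ZMod n)) → a = b := by
    intro a b ha hb hab
    have := congrArg ZMod.val hab
    rwa [ZMod.val_cast_of_lt ha, ZMod.val_cast_of_lt hb] at this
  -- pick points in consecutive intersections
  have hcons : ∀ i : ZMod n, ((S i) ∩ (S (i + 1))).Nonempty := by
    intro i
    exact ((hadj i (i + 1)).mpr (Or.inl rfl)).2
  choose x hx using hcons
  have hx1 : ∀ i, x i ∈ S i := fun i => (hx i).1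
  have hx2 : ∀ i, x i ∈ S (i + 1) := fun i => (hx i).2
  -- meeting S 1 forces index 0, 1 or 2
  have meet1 : ∀ j : ZMod n, ∀ v : W, v ∈ S 1 → v ∈ S j → j = 1 ∨ j = 2 ∨ j = 0 := by
    intro j v hv1 hvj
    by_cases hj1 : j = 1
    · exact Or.inl hj1
    have hne : f 1 ≠ f j := fun hf => hj1 (hinj hf).symm
    have hAdj : (IntGraph F).Adj (f 1) (f j) := ⟨hne, v, hv1, hvj⟩
    rcases (hadj 1 j).mp hAdj with h2 | h0
    · refine Or.inr (Or.inl ?_)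
      rw [h2]; norm_num
    · refine Or.inr (Or.inr ?_)
      linear_combination -h0
  -- S 0 and S 2 are disjoint
  have meet02 : ∀ v : W, v ∈ S 0 → v ∈ S 2 → False := by
    intro v h0 h2
    have hne : f 0 ≠ f 2 := by
      intro hf
      have : (0 : ZMod n) = 2 := hinj hf
      have : (0 : ℕ) = 2 := by
        apply hcast 0 2 (by omega) (by omega)
        simpa using this
      omega
    have hAdj : (IntGraph F).Adj (f 0) (f 2) := ⟨hne, v, h0, h2⟩
    rcases (hadj 0 2).mp hAdj with h | h
    · have : (2 : ℕ) = 1 := by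
        apply hcast 2 1 (by omega) (by omega)
        have h' : (2 : ZMod n) = (0 : ZMod n) + 1 := h
        push_cast
        linear_combination h' 
      omega
    · have : (0 : ℕ) = 3 := by
        apply hcast 0 3 (by omega) (by omega)
        have h' : (0 : ZMod n) = (2 : ZMod n) + 1 := h
        push_cast
        linear_combination h' 
      omega
  -- connected pieces give walks inside each S j
  have hconn : ∀ j : ZMod n, ∀ a, a ∈ S j → ∀ b, b ∈ S j →
      ∃ w : T.Walk a b, ∀ v ∈ w.support, v ∈ S j := by
    intro j a ha b hb
    have hc : (T.induce (S j)).Connected := h _ (f j).2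
    obtain ⟨w⟩ := hc.preconnected ⟨a, ha⟩ ⟨b, hb⟩
    refine ⟨w.map (SimpleGraph.Embedding.induce (S j)).toHom, ?_⟩
    intro v hv
    have hv : v ∈ w.support.map (SimpleGraph.Embedding.induce (G := T) (S j)).toHom := by
      rw [← SimpleGraph.Walk.support_map]; exact hv
    obtain ⟨⟨u, hu⟩, _, rfl⟩ := List.mem_map.mp hv
    exact hu
  -- segments of the cycle
  have hseg : ∀ m : ZMod n, ∃ w : T.Walk (x m) (x (m + 1)), ∀ v ∈ w.support, v ∈ S (m + 1) :=
    fun m => hconn (m + 1) _ (hx2 m) _ (hx1 (m + 1))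
  choose seg hsegmem using hseg
  -- the long walk around the cycle
  let g : ∀ k : ℕ, T.Walk (x 1) (x (1 + (k : ZMod n))) := fun k =>
    Nat.rec (motive := fun k => T.Walk (x 1) (x (1 + (k : ZMod n))))
      (SimpleGraph.Walk.nil.copy rfl (congrArg x (by push_cast; ring)))
      (fun k ih => ((ih.append (seg (1 + (k : ZMod n)))).copy rfl
        (congrArg x (by push_cast; ring)))) k
  have hgsucc : ∀ k : ℕ, g (k + 1) = ((g k).append (seg (1 + (k : ZMod n)))).copy rfl
      (congrArg x (by push_cast; ring)) := fun k => rfl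
  -- edges of the long walk lie in some S j with j ≠ 1
  have hedge : ∀ k : ℕ, k ≤ n - 1 →
      ∀ e ∈ (g k).edges, ∃ j : ZMod n, j ≠ 1 ∧ ∀ v ∈ e, v ∈ S j := by
    intro k
    induction k with
    | zero => intro _ e he; simp [g] at he
    | succ k ihk =>
      intro hkle e he
      rw [hgsucc, SimpleGraph.Walk.edges_copy, SimpleGraph.Walk.edges_append] at he
      rcases List.mem_append.mp he with h1 | h2
      · exact ihk (by omega) e h1
      · refine ⟨1 + (k : ZMod n) + 1, ?_, ?_⟩
        · intro heq
          have : ((k + 1 : ℕ) : ZMod n) = 0 := by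
            have : (k : ZMod n) + 1 = 0 := by
              have := congrArg (fun z => z - 1) heq
              simp at this
              linear_combination this
            push_cast
            exact this
          rw [ZMod.natCast_eq_zero_iff] at this
          have := Nat.le_of_dvd (by omega) this
          omega
        · refine Sym2.ind (fun a b hab => fun v hv => ?_) e h2
          rcases Sym2.mem_iff.mp hv with rfl | rfl
          · exact hsegmem _ _ ((seg (1 + (k : ZMod n))).fst_mem_support_of_mem_edges hab)
          · exact hsegmem _ _ ((seg (1 + (k : ZMod n))).snd_mem_support_of_mem_edges hab)
  -- the big walk from x 1 to x 0
  have hn0 : (1 + ((n - 1 : ℕ) : ZMod n)) = (0 : ZMod n) := by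
    have h1 : ((1 + (n - 1) : ℕ) : ZMod n) = ((n : ℕ) : ZMod n) := by
      congr 1; omega
    have h2 : ((n : ℕ) : ZMod n) = 0 := ZMod.natCast_self n
    push_cast at h1
    rw [h1, h2]
  let Wbig : T.Walk (x 1) (x 0) := (g (n - 1)).copy rfl (congrArg x hn0)
  -- the short path from x 0 to x 1 inside S 1
  have h01 : ((0 : ZMod n) + 1) = (1 : ZMod n) := by ring
  let P0 : T.Walk (x 0) (x 1) := ((seg 0).copy rfl (congrArg x h01)).bypass
  have hP0path : P0.IsPath := SimpleGraph.Walk.bypass_isPath _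
  have hP0supp : ∀ v ∈ P0.support, v ∈ S 1 := by
    intro v hv
    have := SimpleGraph.Walk.support_bypass_subset _ hv
    rw [SimpleGraph.Walk.support_copy] at this
    have := hsegmem 0 v this
    rwa [h01] at this
  -- every edge of P0 is an edge of Wbig.reverse
  have hsub : ∀ e ∈ P0.edges, e ∈ Wbig.reverse.edges :=
    aux_path_edges_subset hT.2 P0 hP0path Wbig.reverse
  -- classify edges of P0
  have hclass : ∀ e ∈ P0.edges, (∀ v ∈ e, v ∈ S 0) ∨ (∀ v ∈ e, v ∈ S 2) := by
    intro e he
    have hew : e ∈ (g (n - 1)).edges := by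
      have := hsub e he
      rw [SimpleGraph.Walk.edges_reverse, List.mem_reverse] at this
      rwa [show Wbig.edges = (g (n - 1)).edges from SimpleGraph.Walk.edges_copy _ _ _] at this
    obtain ⟨j, hj1, hjS⟩ := hedge (n - 1) le_rfl e hew
    -- both endpoints of e are in S 1
    have heS1 : ∀ v ∈ e, v ∈ S 1 := by
      refine Sym2.ind (fun a b hab => fun v hv => ?_) e he
      rcases Sym2.mem_iff.mp hv with rfl | rfl
      · exact hP0supp _ (P0.fst_mem_support_of_mem_edges hab)
      · exact hP0supp _ (P0.snd_mem_support_of_mem_edges hab)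
    obtain ⟨a, ha⟩ : ∃ a, a ∈ e := by
      induction e using Sym2.ind with
      | _ a b => exact ⟨a, Sym2.mem_mk_left a b⟩
    rcases meet1 j a (heS1 a ha) (hjS a ha) with rfl | rfl | rfl
    · exact absurd rfl hj1
    · exact Or.inr hjS
    · exact Or.inl hjS
  -- propagate membership in S 0 along P0
  have hAC : S 0 ∩ S 2 = ∅ := by
    ext v; simp only [Set.mem_inter_iff, Set.mem_empty_iff_false, iff_false, not_and]
    exact fun h0 h2 => (meet02 v h0 h2).elim
  have hx1in0 : x 1 ∈ S 0 := aux_walk_AC hAC P0 hclass (hx1 0)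
  have hx1in2 : x 1 ∈ S 2 := by
    have := hx2 1
    rwa [show (1 : ZMod n) + 1 = 2 from by ring] at this
  exact meet02 _ hx1in0 hx1in2
end
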